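/- Let G be a rationally perfect group and let H be a subgroup of G of finite index. Then H is rationally perfect. -/

import Mathlib

open groupCohomology

section Shapiro

variable {G : Type} [Group G] (H : Subgroup G)

/-- The "H-part" of `x` relative to the chosen coset representative `(x : G ⧸ H).out`,
so that `x = (x : G ⧸ H).out * del H x`. -/
noncomputable def del (x : G) : H :=
  ⟨((x : G ⧸ H)).out⁻¹ * x, by
    rw [← QuotientGroup.eq]
    exact QuotientGroup.out_eq' _⟩

lemma del_coe (x : G) : (del H x : G) = ((x : G ⧸ H)).out⁻¹ * x := rfl

lemma out_mul_del (x : G) : ((x : G ⧸ H)).out * (del H x : G) = x := by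
  simp [del_coe]

lemma mk_mul_mem (x : G) (h : H) : ((x * h : G) : G ⧸ H) = (x : G ⧸ H) := by
  symm; rw [QuotientGroup.eq]
  simpa [mul_assoc] using h.2

lemma del_mul (x : G) (h : H) : del H (x * h) = del H x * h := by
  apply Subtype.ext
  simp [del_coe, mk_mul_mem, mul_assoc]

lemma mul_out (y x : G) :
    y * ((x : G ⧸ H)).out = (y * x) * ((del H x : G))⁻¹ := by
  rw [eq_mul_inv_iff_mul_eq, mul_assoc, out_mul_del]

lemma mk_mul_out (y x : G) :
    ((y * ((x : G ⧸ H)).out : G) : G ⧸ H) = ((y * x : G) : G ⧸ H) := by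
  rw [mul_out]
  exact mk_mul_mem H _ ((del H x)⁻¹)

lemma del_mul_out (y x : G) :
    del H (y * ((x : G ⧸ H)).out) = del H (y * x) * (del H x)⁻¹ := by
  rw [mul_out]
  exact del_mul H _ ((del H x)⁻¹)

lemma del_out (c : G ⧸ H) : del H c.out = 1 := by
  apply Subtype.ext
  simp [del_coe, QuotientGroup.out_eq']

variable {V : Type} [AddCommGroup V] [Module ℚ V] (ρ : Representation ℚ H V)

lemma rho_aux (a b : H) (v : V) : ρ a⁻¹ (ρ (b * a⁻¹)⁻¹ v) = ρ b⁻¹ v := by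
  rw [← Module.End.mul_apply, ← map_mul]
  have h : a⁻¹ * (b * a⁻¹)⁻¹ = b⁻¹ := by group
  rw [h]

/-- The coinduced representation of `ρ` on `(G ⧸ H) → V`. -/
noncomputable def coind : Representation ℚ G ((G ⧸ H) → V) where
  toFun g :=
    { toFun := fun φ c => ρ (del H (g⁻¹ * c.out))⁻¹ (φ ((g⁻¹ * c.out : G) : G ⧸ H))
      map_add' := fun φ ψ => by funext c; simp
      map_smul' := fun r φ => by funext c; simp }
  map_one' := by
    ext φ c
    simp [del_out, QuotientGroup.out_eq']
  map_mul' := fun g₁ g₂ => by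
    ext φ c
    show ρ (del H ((g₁ * g₂)⁻¹ * c.out))⁻¹ (φ (((g₁ * g₂)⁻¹ * c.out : G) : G ⧸ H))
      = ρ (del H (g₁⁻¹ * c.out))⁻¹
          (ρ (del H (g₂⁻¹ * (((g₁⁻¹ * c.out : G) : G ⧸ H)).out))⁻¹
            (φ ((g₂⁻¹ * (((g₁⁻¹ * c.out : G) : G ⧸ H)).out : G) : G ⧸ H)))
    rw [mk_mul_out, del_mul_out]
    rw [show (g₁ * g₂)⁻¹ * c.out = g₂⁻¹ * (g₁⁻¹ * c.out) by group]
    exact (rho_aux H ρ _ _ _).symm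

lemma coind_apply (g : G) (φ : (G ⧸ H) → V) (c : G ⧸ H) :
    coind H ρ g φ c = ρ (del H (g⁻¹ * c.out))⁻¹ (φ ((g⁻¹ * c.out : G) : G ⧸ H)) :=
  rfl

end Shapiro

/-- A group `G` is *rationally perfect* if `H¹(G; V) = 0` for every
finite-dimensional rational representation `V` of `G`. -/
def RationallyPerfect (G : Type) [Group G] : Prop :=
  ∀ (V : Type) [AddCommGroup V] [Module ℚ V] [FiniteDimensional ℚ V]
    (ρ : Representation ℚ G V),
      Subsingleton (groupCohomology.H1 (Rep.of ρ))

/-- A finite-index subgroup of a rationally perfect group is rationally perfect. -/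
theorem statement_6 (G : Type) [Group G] (H : Subgroup G) [H.FiniteIndex]
    (hG : RationallyPerfect G) : RationallyPerfect H := by
  intro V _ _ _ ρ
  suffices hz : ∀ x : groupCohomology.H1 (Rep.of ρ), x = 0 from ⟨fun x y => by rw [hz x, hz y]⟩
  intro x
  refine groupCohomology.H1_induction_on x (fun f => ?_)
  rw [groupCohomology.H1π_eq_zero_iff, groupCohomology.coboundaries₁, LinearMap.mem_range]
  -- f is a 1-cocycle for ρ; transfer it to a 1-cocycle F for the coinduced rep.
  have hf : ∀ a b : H, f.1 (a * b) = (Rep.of ρ).ρ a (f.1 b) + f.1 a := fun a b =>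
    (groupCohomology.mem_cocycles₁_iff (A := Rep.of ρ) f.1).1 f.2 a b
  rw [Rep.of_ρ] at hf
  set F : G → ((G ⧸ H) → V) := fun g c => f.1 ((del H (g⁻¹ * c.out))⁻¹) with hF
  have hFapp : ∀ (g : G) (c : G ⧸ H), F g c = f.1 ((del H (g⁻¹ * c.out))⁻¹) :=
    fun _ _ => rfl
  have hFcoc : F ∈ groupCohomology.cocycles₁ (Rep.of (coind H ρ)) := by
    rw [groupCohomology.mem_cocycles₁_iff]
    intro g₁ g₂
    funext c
    show F (g₁ * g₂) c = coind H ρ g₁ (F g₂) c + F g₁ c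
    rw [coind_apply]
    set x : G := g₁⁻¹ * c.out with hx
    have h2 : F g₂ ((x : G ⧸ H)) = f.1 ((del H x) * (del H (g₂⁻¹ * x))⁻¹) := by
      rw [hFapp, del_mul_out]
      congr 1
      group
    have h1 : F (g₁ * g₂) c = f.1 ((del H (g₂⁻¹ * x))⁻¹) := by
      rw [hFapp]
      rw [show (g₁ * g₂)⁻¹ * c.out = g₂⁻¹ * x by rw [hx]; group]
    have h0 : F g₁ c = f.1 ((del H x)⁻¹) := hFapp g₁ c
    rw [h1, h2, h0]
    have h3 := hf (del H x)⁻¹ ((del H x) * (del H (g₂⁻¹ * x))⁻¹)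
    rw [show (del H x)⁻¹ * ((del H x) * (del H (g₂⁻¹ * x))⁻¹)
        = (del H (g₂⁻¹ * x))⁻¹ by group] at h3
    exact h3
  -- By rational perfectness of G, F is a coboundary.
  have hsub : Subsingleton (groupCohomology.H1 (Rep.of (coind (V := V) H ρ))) := by
    have : Fintype (G ⧸ H) := Fintype.ofFinite _
    exact hG ((G ⧸ H) → V) (coind H ρ)
  have hFmem : F ∈ groupCohomology.coboundaries₁ (Rep.of (coind H ρ)) :=
    (groupCohomology.H1π_eq_zero_iff (⟨F, hFcoc⟩ : groupCohomology.cocycles₁ (Rep.of (coind H ρ)))).1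
      (Subsingleton.elim _ _)
  rw [groupCohomology.coboundaries₁, LinearMap.mem_range] at hFmem
  obtain ⟨φ, hφ⟩ := hFmem
  -- Extract the vector that witnesses `f` as a coboundary.
  set c₁ : G ⧸ H := ((1 : G) : G ⧸ H) with hc₁
  set e₀ : G := c₁.out with he₀
  have he₀H : e₀ ∈ H := by
    have h4 : (e₀ : G ⧸ H) = c₁ := QuotientGroup.out_eq' _
    rw [hc₁, eq_comm, QuotientGroup.eq] at h4
    simpa using h4
  refine ⟨φ c₁, funext fun h' => ?_⟩
  rw [groupCohomology.d₀₁_hom_apply]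
  set ε : H := ⟨e₀, he₀H⟩ with hε
  set g : G := (↑(ε * h' * ε⁻¹) : G) with hg
  have key : coind H ρ g φ c₁ - φ c₁ = F g c₁ := by
    rw [← hφ, groupCohomology.d₀₁_hom_apply]; rfl
  have hginv : g⁻¹ * c₁.out = e₀ * (↑(h'⁻¹) : G) := by
    rw [hg, ← he₀]
    push_cast [hε]
    group
  have hmk : ((g⁻¹ * c₁.out : G) : G ⧸ H) = c₁ := by
    rw [hginv, hc₁]
    symm
    rw [QuotientGroup.eq]
    simpa using mul_mem he₀H (h'⁻¹ : H).2
  have hdel : del H (g⁻¹ * c₁.out) = h'⁻¹ := by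
    apply Subtype.ext
    rw [del_coe, hginv]
    rw [show ((e₀ * (↑(h'⁻¹) : G) : G) : G ⧸ H) = c₁ from by rw [← hginv]; exact hmk]
    rw [← he₀]
    group
  have hcoind : coind H ρ g φ c₁ = ρ h' (φ c₁) := by
    rw [coind_apply, hdel, hmk, inv_inv]
  have hFg : F g c₁ = f.1 h' := by
    rw [hFapp, hdel, inv_inv]
  rw [hcoind, hFg] at key
  exact key
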